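/- Let x < y be real numbers, let α₁, α₂, α₃, α₄ satisfy 1 ≥ α₁ > α₂ > α₃ > α₄ ≥ 0, and let a₁, a₂, a₃, a₄ be real numbers with a₁ + a₂ + a₃ + a₄ = 0. If for every continuous convex function f : [x,y] → ℝ and every antiderivative F of f the inequality (Σ_{i=1}^{4} aᵢF(αᵢx + (1−αᵢ)y))/(y−x) ≤ (f(x)+f(y))/2 holds, then a₁(α₂−α₁) + (a₁+a₂)(α₃−α₂) + (a₁+a₂+a₃)(α₄−α₃) = 1 and a₁(α₂²−α₁²) + (a₁+a₂)(α₃²−α₂²) + (a₁+a₂+a₃)(α₄²−α₃²) = 1. -/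

import Mathlib

lemma affine_convexOn (s : Set ℝ) (hs : Convex ℝ s) (a b : ℝ) :
    ConvexOn ℝ s (fun t => a * t + b) := by
  refine ⟨hs, fun u _ v _ p q hp hq hpq => ?_⟩
  simp only [smul_eq_mul]
  have : a * (p * u + q * v) + b = p * (a * u + b) + q * (a * v + b) := by
    linear_combination (-b) * hpq
  linarith [this.le]

lemma neg_convexOn' (x y : ℝ) : ConvexOn ℝ (Set.Icc x y) (fun t : ℝ => -t) := by
  refine ⟨convex_Icc x y, fun u _ v _ p q hp hq hpq => ?_⟩
  simp only [smul_eq_mul]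
  linarith

theorem stmt_8 (x y : ℝ) (hxy : x < y) (α₁ α₂ α₃ α₄ a₁ a₂ a₃ a₄ : ℝ)
    (hα₁ : α₁ ≤ 1) (h12 : α₂ < α₁) (h23 : α₃ < α₂) (h34 : α₄ < α₃) (hα₄ : 0 ≤ α₄)
    (ha : a₁ + a₂ + a₃ + a₄ = 0)
    (H : ∀ f F : ℝ → ℝ, ContinuousOn f (Set.Icc x y) → ConvexOn ℝ (Set.Icc x y) f →
        (∀ t ∈ Set.Icc x y, HasDerivWithinAt F (f t) (Set.Icc x y) t) →
        (a₁ * F (α₁ * x + (1 - α₁) * y) + a₂ * F (α₂ * x + (1 - α₂) * y)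
            + a₃ * F (α₃ * x + (1 - α₃) * y) + a₄ * F (α₄ * x + (1 - α₄) * y)) / (y - x)
          ≤ (f x + f y) / 2) :
    a₁ * (α₂ - α₁) + (a₁ + a₂) * (α₃ - α₂) + (a₁ + a₂ + a₃) * (α₄ - α₃) = 1 ∧
    a₁ * (α₂ ^ 2 - α₁ ^ 2) + (a₁ + a₂) * (α₃ ^ 2 - α₂ ^ 2)
      + (a₁ + a₂ + a₃) * (α₄ ^ 2 - α₃ ^ 2) = 1 := by
  have hpos : (0:ℝ) < y - x := by linarith
  have hne : (x - y) ≠ 0 := by intro h; linarith [sub_eq_zero.mp h]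
  have hc : Convex ℝ (Set.Icc x y) := convex_Icc x y
  -- f ≡ 1, F = id
  have h1 := H (fun _ => 1) (fun t => t) continuousOn_const
    (convexOn_const _ hc)
    (fun t _ => (hasDerivAt_id t).hasDerivWithinAt)
  -- f ≡ -1, F = -id
  have h2 := H (fun _ => -1) (fun t => -t) continuousOn_const
    (convexOn_const _ hc)
    (fun t _ => ((hasDerivAt_id t).neg).hasDerivWithinAt)
  -- f = id, F = t²/2
  have hF3 : ∀ t : ℝ, HasDerivAt (fun s : ℝ => s ^ 2 / 2) t t := by
    intro t
    have := (hasDerivAt_pow 2 t).div_const 2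
    simpa using this
  have h3 := H (fun t => t) (fun t => t ^ 2 / 2) continuous_id.continuousOn
    (convexOn_id hc)
    (fun t _ => (hF3 t).hasDerivWithinAt)
  -- f = -id, F = -t²/2
  have h4 := H (fun t => -t) (fun t => -(t ^ 2 / 2)) continuous_neg.continuousOn
    (neg_convexOn' x y)
    (fun t _ => ((hF3 t).neg).hasDerivWithinAt)
  rw [div_le_iff₀ hpos] at h1 h2 h3 h4
  have e1 : a₁ * (α₁ * x + (1 - α₁) * y) + a₂ * (α₂ * x + (1 - α₂) * y)
      + a₃ * (α₃ * x + (1 - α₃) * y) + a₄ * (α₄ * x + (1 - α₄) * y) = y - x := by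
    linarith [h1, h2]
  have e2 : a₁ * ((α₁ * x + (1 - α₁) * y) ^ 2 / 2) + a₂ * ((α₂ * x + (1 - α₂) * y) ^ 2 / 2)
      + a₃ * ((α₃ * x + (1 - α₃) * y) ^ 2 / 2) + a₄ * ((α₄ * x + (1 - α₄) * y) ^ 2 / 2)
      = (x + y) / 2 * (y - x) := by
    linarith [h3, h4]
  have hS1 : a₁ * α₁ + a₂ * α₂ + a₃ * α₃ + a₄ * α₄ = -1 := by
    have key : (x - y) * (a₁ * α₁ + a₂ * α₂ + a₃ * α₃ + a₄ * α₄ + 1) = 0 := by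
      linear_combination e1 - y * ha
    rcases mul_eq_zero.mp key with h | h
    · exact absurd h hne
    · linarith
  have hS2 : a₁ * α₁ ^ 2 + a₂ * α₂ ^ 2 + a₃ * α₃ ^ 2 + a₄ * α₄ ^ 2 = -1 := by
    have key : (x - y) ^ 2 * (a₁ * α₁ ^ 2 + a₂ * α₂ ^ 2 + a₃ * α₃ ^ 2 + a₄ * α₄ ^ 2 + 1) = 0 := by
      linear_combination 2 * e2 - y ^ 2 * ha - 2 * y * (x - y) * hS1
    have h2ne : (x - y) ^ 2 ≠ 0 := pow_ne_zero _ hne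
    rcases mul_eq_zero.mp key with h | h
    · exact absurd h h2ne
    · linarith
  constructor
  · linear_combination -hS1 + α₄ * ha
  · linear_combination -hS2 + α₄ ^ 2 * ha
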